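/- If G is a connected graph having a clique separator, then G has a monophonically convex 2-cover: there exist two m-convex sets, each a proper subset of V(G), whose union is V(G). -/

import Mathlib

/-- A walk is an induced path if it is a path and no two non-consecutive
vertices on it are adjacent (i.e., it has no chord). -/
def IsInducedPath {V : Type*} (G : SimpleGraph V) {u v : V} (p : G.Walk u v) : Prop :=
  p.IsPath ∧ ∀ (i j : ℕ) (hi : i < p.support.length) (hj : j < p.support.length),
    i + 1 < j → ¬ G.Adj p.support[i] p.support[j]

/-- `M` is monophonically convex if every induced path with both endpoints in `M`
lies entirely in `M`. -/
def mConvex {V : Type*} (G : SimpleGraph V) (M : Set V) : Prop :=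
  ∀ ⦃u v : V⦄ (p : G.Walk u v), IsInducedPath G p → u ∈ M → v ∈ M →
    ∀ x ∈ p.support, x ∈ M

lemma key {V : Type*} (G : SimpleGraph V) (C D : Set V) (hC : G.IsClique C)
    (hedge : ∀ a ∈ D, ∀ b, b ∉ C → b ∉ D → ¬ G.Adj a b) :
    mConvex G (C ∪ D) := by
  classical
  intro u v p hp hu hv x hx
  by_contra hxM
  set l := p.support with hl
  obtain ⟨i, hi, hix⟩ := List.mem_iff_getElem.mp hx
  subst hix
  have hchain := List.isChain_iff_getElem.mp p.isChain_adj_support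
  rw [← hl] at hchain
  have hadj : ∀ k (hk : k + 1 < l.length), G.Adj (l[k]'(by omega)) (l[k+1]'hk) := by
    intro k hk
    simpa [List.get_eq_getElem] using hchain k (by omega)
  have hnd : l.Nodup := hp.1.support_nodup
  have h0 : l[0]'(by omega) = u := by
    have : l.head (by simp [hl]) = u := p.head_support
    rwa [List.head_eq_getElem] at this
  have hlast : l[l.length - 1]'(by have := p.support_ne_nil; omega) = v := by
    have : l.getLast (by simp [hl]) = v := p.getLast_support
    rwa [List.getLast_eq_getElem] at this
  set P : ℕ → Prop := fun k => ∃ h : k < l.length, l[k] ∈ C ∪ D with hP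
  have hP0 : P 0 := ⟨by omega, by rw [h0]; exact hu⟩
  have hPi : ¬ P i := fun ⟨_, h⟩ => hxM h
  set a := Nat.findGreatest P i with ha
  have hPa : P a := Nat.findGreatest_spec (Nat.zero_le i) hP0
  have hai : a ≤ i := Nat.findGreatest_le i
  have hai' : a < i := lt_of_le_of_ne hai (fun h => hPi (h ▸ hPa))
  have hPa1 : ¬ P (a + 1) := fun hp1 => by
    have h2 : a + 1 ≤ Nat.findGreatest P i := Nat.le_findGreatest (by omega) hp1
    omega
  obtain ⟨haL, haM⟩ := hPa
  have ha1L : a + 1 < l.length := by omega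
  have hna1 : l[a+1]'ha1L ∉ C ∪ D := fun h => hPa1 ⟨ha1L, h⟩
  have hlaC : l[a]'haL ∈ C := by
    rcases haM with h | h
    · exact h
    · exact absurd (hadj a ha1L)
        (hedge _ h _ (fun hc => hna1 (Or.inl hc)) (fun hd => hna1 (Or.inr hd)))
  -- the right side
  have hEx : ∃ j, i ≤ j ∧ ∃ h : j < l.length, l[j] ∈ C ∪ D := by
    refine ⟨l.length - 1, by omega, by omega, ?_⟩
    rw [hlast]; exact hv
  set b := Nat.find hEx with hb
  have hspec := Nat.find_spec hEx
  rw [← hb] at hspec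
  obtain ⟨hib, hbL, hbM⟩ := hspec
  have hib' : i < b := by
    rcases lt_or_eq_of_le hib with h | h
    · exact h
    · exfalso
      have heq : l[b]'hbL = l[i]'hi := by congr 1; omega
      exact hxM (heq ▸ hbM)
  have hbm1 : ¬ (i ≤ b - 1 ∧ ∃ h : b - 1 < l.length, l[b-1] ∈ C ∪ D) :=
    Nat.find_min hEx (by omega)
  have hb1L : b - 1 < l.length := by omega
  have hnb1 : l[b-1]'hb1L ∉ C ∪ D := fun h => hbm1 ⟨by omega, hb1L, h⟩
  have hlbC : l[b]'hbL ∈ C := by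
    rcases hbM with h | h
    · exact h
    · have hadjb := hadj (b-1) (by omega)
      have heq : b - 1 + 1 = b := by omega
      simp only [heq] at hadjb
      exact absurd hadjb.symm
        (hedge _ h _ (fun hc => hnb1 (Or.inl hc)) (fun hd => hnb1 (Or.inr hd)))
  have hne : (l[a]'haL) ≠ (l[b]'hbL) := by
    intro h
    have := (List.Nodup.getElem_inj_iff hnd).mp h
    omega
  exact hp.2 a b haL hbL (by omega) (hC hlaC hlbC hne)

theorem stmt_16 {V : Type*} [Fintype V] (G : SimpleGraph V) (hG : G.Connected)
    (C : Set V) (hC : G.IsClique C)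
    (hsep : ¬ (G.induce (Cᶜ : Set V)).Preconnected) :
    ∃ M₁ M₂ : Set V, mConvex G M₁ ∧ mConvex G M₂ ∧
      M₁ ≠ Set.univ ∧ M₂ ≠ Set.univ ∧ M₁ ∪ M₂ = Set.univ := by
  classical
  simp only [SimpleGraph.Preconnected, not_forall] at hsep
  obtain ⟨x, y, hxy⟩ := hsep
  set A : Set V := {w : V | ∃ h : w ∈ (Cᶜ : Set V), (G.induce (Cᶜ : Set V)).Reachable x ⟨w, h⟩}
    with hA
  have hedge1 : ∀ a ∈ A, ∀ b, b ∉ C → b ∉ A → ¬ G.Adj a b := by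
    rintro a ⟨hac, hreach⟩ b hbC hbA hadj
    exact hbA ⟨hbC, hreach.trans (SimpleGraph.Adj.reachable (by exact hadj))⟩
  have hedge2 : ∀ a ∈ (Cᶜ : Set V) \ A, ∀ b, b ∉ C → b ∉ (Cᶜ : Set V) \ A → ¬ G.Adj a b := by
    rintro a ⟨haC, haA⟩ b hbC hb hadj
    have hbA : b ∈ A := by
      by_contra hbA
      exact hb ⟨hbC, hbA⟩
    exact hedge1 b hbA a (fun h => haC h) haA hadj.symm
  refine ⟨C ∪ A, C ∪ ((Cᶜ : Set V) \ A), key G C A hC hedge1, key G C _ hC hedge2, ?_, ?_, ?_⟩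
  · intro h
    have hy : (y : V) ∈ C ∪ A := h ▸ Set.mem_univ _
    rcases hy with h1 | h1
    · exact y.2 h1
    · exact hxy (h1.2.trans (by rw [Subtype.coe_eta]))
  · intro h
    have hx : (x : V) ∈ C ∪ ((Cᶜ : Set V) \ A) := h ▸ Set.mem_univ _
    rcases hx with h1 | h1
    · exact x.2 h1
    · exact h1.2 ⟨x.2, by rw [Subtype.coe_eta]⟩
  · ext w
    simp only [Set.mem_union, Set.mem_diff, Set.mem_compl_iff, Set.mem_univ, iff_true]
    by_cases hw : w ∈ C
    · exact Or.inl (Or.inl hw)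
    · by_cases hwA : w ∈ A
      · exact Or.inl (Or.inr hwA)
      · exact Or.inr (Or.inr ⟨hw, hwA⟩)
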